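/- arXiv:2406.10440 — 5 statements merged into one kernel-verified Lean document; each statement's English description precedes it below -/
import Mathlib

section
/- Let O be an order in an imaginary quadratic field K and let m > 2 be an integer coprime to the discriminant of O. Then the image of O under the norm map, reduced modulo m, is not contained in the set of squares in Z/mZ. -/
/-!
STATEMENT 0: Let `O = ℤ[τ]` be an order in an imaginary quadratic field (τ of trace `t`
and norm `n`, so the discriminant is `Δ = t^2 - 4n < 0`), and let `m > 2` be an integer
coprime to the discriminant.  Then the image of `O` under the norm map
`N(a + bτ) = a^2 + t*a*b + n*b^2`, reduced modulo `m`, is not contained in the set of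
squares of `ℤ/mℤ`.
-/

/-- The norm form of the order `ℤ[τ]`, where `τ` has trace `t` and norm `n`:
`N(a + bτ) = a² + t·a·b + n·b²`. -/
def nrm (t n a b : ℤ) : ℤ := a ^ 2 + t * a * b + n * b ^ 2

theorem norms_not_all_squares (t n : ℤ) (himag : t ^ 2 - 4 * n < 0)
    (m : ℕ) (hm : 2 < m) (hcop : IsCoprime (m : ℤ) (t ^ 2 - 4 * n)) :
    ¬ (∀ a b : ℤ, IsSquare ((nrm t n a b : ℤ) : ZMod m)) := by
  intro h
  haveI : NeZero m := ⟨by omega⟩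
  set Δ : ZMod m := ((t ^ 2 - 4 * n : ℤ) : ZMod m) with hΔ
  -- Δ is a unit mod m
  obtain ⟨u, v, huv⟩ := hcop
  have hunit : IsUnit Δ := by
    apply IsUnit.of_mul_eq_one (a := Δ) ((v : ℤ) : ZMod m)
    have : ((u * m + v * (t ^ 2 - 4 * n) : ℤ) : ZMod m) = ((1 : ℤ) : ZMod m) := by
      rw [huv]
    push_cast at this
    rw [ZMod.natCast_self] at this
    rw [hΔ]; push_cast
    linear_combination this
  -- key: x² - Δ is always a square
  have key : ∀ x : ZMod m, IsSquare (x * x - Δ) := by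
    intro x
    obtain ⟨a, rfl⟩ := ZMod.intCast_surjective x
    have := h (a - t) 2
    have heq : ((a : ZMod m)) * a - Δ = ((nrm t n (a - t) 2 : ℤ) : ZMod m) := by
      rw [hΔ]; unfold nrm; push_cast; ring
    rw [heq]; exact this
  have step : ∀ y : ZMod m, IsSquare y → IsSquare (y - Δ) := by
    rintro y ⟨r, hr⟩
    rw [hr]; exact key r
  have iter : ∀ k : ℕ, IsSquare (-(k : ZMod m) * Δ) := by
    intro k
    induction k with
    | zero => exact ⟨0, by push_cast; ring⟩
    | succ k ih =>
      have := step _ ih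
      have heq : -(k : ZMod m) * Δ - Δ = -((k + 1 : ℕ) : ZMod m) * Δ := by
        push_cast; ring
      rwa [heq] at this
  have all : ∀ y : ZMod m, IsSquare y := by
    intro y
    obtain ⟨w, hw⟩ := hunit
    set z : ZMod m := -y * ↑w⁻¹ with hz
    have hzy : -z * Δ = y := by
      rw [hz, ← hw]
      have : (↑w⁻¹ : ZMod m) * ↑w = 1 := w.inv_mul
      linear_combination y * this
    have hval : ((z.val : ℕ) : ZMod m) = z := ZMod.natCast_val z |>.trans (ZMod.cast_id' ▸ rfl)
    have := iter z.val
    rw [hval, hzy] at this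
    exact this
  -- contradiction: squaring is surjective but not injective
  have hsurj : Function.Surjective (fun r : ZMod m => r * r) := by
    intro y
    obtain ⟨r, hr⟩ := all y
    exact ⟨r, hr.symm⟩
  have hinj := Finite.injective_iff_surjective.mpr hsurj
  have h1 : (-1 : ZMod m) = 1 := hinj (by ring)
  have h2 : ((2 : ℕ) : ZMod m) = 0 := by push_cast; linear_combination -h1
  have := (ZMod.natCast_eq_zero_iff 2 m).mp h2
  have := Nat.le_of_dvd (by norm_num) this
  omega
end

section
/- Let p be an odd prime that splits or is inert in an imaginary quadratic order O, and let m = p^k > 2 be a power of p. Then there exists λ ∈ O such that N(λ) mod m is not a square in Z/mZ. -/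
theorem exists_nonsquare_norm_of_split_or_inert (t n : ℤ) (himag : t ^ 2 - 4 * n < 0)
    (p : ℕ) (hp : p.Prime) (hodd : Odd p) (k : ℕ) (hm : 2 < p ^ k)
    (hsplit_or_inert :
      (∃ x : ZMod p, x ≠ 0 ∧ x ^ 2 = ((t ^ 2 - 4 * n : ℤ) : ZMod p)) ∨
      ¬ IsSquare ((t ^ 2 - 4 * n : ℤ) : ZMod p)) :
    ∃ a b : ℤ, ¬ IsSquare ((nrm t n a b : ℤ) : ZMod (p ^ k)) := by
  haveI : Fact p.Prime := ⟨hp⟩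
  set Δ : ZMod p := ((t ^ 2 - 4 * n : ℤ) : ZMod p) with hΔdef
  have hΔne : Δ ≠ 0 := by
    rcases hsplit_or_inert with ⟨x, hx, hx2⟩ | h
    · intro h0
      exact hx (pow_eq_zero_iff (two_ne_zero) |>.mp (hx2.trans h0))
    · intro h0
      exact h (by rw [h0]; exact IsSquare.zero)
  -- there is x with x² - Δ a nonsquare mod p
  have hexists : ∃ x : ZMod p, ¬ IsSquare (x ^ 2 - Δ) := by
    by_contra hcon
    push_neg at hcon
    have hall : ∀ m : ℕ, IsSquare ((-(m : ZMod p)) * Δ) := by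
      intro m
      induction m with
      | zero => simp
      | succ m ih =>
        obtain ⟨y, hy⟩ := ih
        have h := hcon y
        have heq : y ^ 2 - Δ = (-((m + 1 : ℕ) : ZMod p)) * Δ := by
          have : y * y = (-(m : ZMod p)) * Δ := hy.symm
          push_cast
          rw [sq, this]; ring
        rwa [heq] at h
    have hallsq : ∀ c : ZMod p, IsSquare c := by
      intro c
      obtain ⟨m, hm'⟩ := ZMod.natCast_rightInverse.surjective (-c * Δ⁻¹ : ZMod p)
      have hc : (-(m : ZMod p)) * Δ = c := by
        rw [hm']
        field_simp
      rw [← hc]; exact hall m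
    have hp2 : ringChar (ZMod p) ≠ 2 := by
      rw [ZMod.ringChar_zmod_n]
      rcases hodd with ⟨j, hj⟩
      omega
    obtain ⟨a, ha⟩ := FiniteField.exists_nonsquare hp2
    exact ha (hallsq a)
  obtain ⟨x, hx⟩ := hexists
  refine ⟨(x.val : ℤ) - t, 2, ?_⟩
  intro hsq
  have hk : k ≠ 0 := by rintro rfl; simp at hm
  have hdvd : p ∣ p ^ k := dvd_pow_self p hk
  apply hx
  have hval : ((x.val : ℕ) : ZMod p) = x := ZMod.natCast_rightInverse x
  have heq : ((nrm t n ((x.val : ℤ) - t) 2 : ℤ) : ZMod p) = x ^ 2 - Δ := by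
    rw [hΔdef]
    simp only [nrm]
    push_cast
    rw [hval]
    ring
  rw [← heq]
  obtain ⟨r, hr⟩ := hsq
  refine ⟨ZMod.castHom hdvd (ZMod p) r, ?_⟩
  rw [← map_mul, ← hr, map_intCast]
end

section
/- Let O ⊆ O' be orders in an imaginary quadratic field with index f = [O' : O], and let α ∈ O have norm N(α) coprime to f. Then the natural map O/αO → O'/αO' is an isomorphism of O-modules. -/
/-!
STATEMENT 2: Let `O ⊆ O'` be orders in an imaginary quadratic field with index
`f = [O' : O]`, and let `α ∈ O` have norm `N(α)` coprime to `f`.  Then the natural map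
`O/αO → O'/αO'` is an isomorphism of `O`-modules.

We model `O' = ℤ[σ]` where `σ` is a root of `X² - tX + n` (an imaginary quadratic order
since `t² - 4n < 0`), and `O = ℤ[fσ]` is the suborder of index `f`, realized as the
subring of `O'` generated by `f·σ`.  An element `α = a + (f·b)·σ ∈ O` has norm
`N(α) = a² + t·a·(f·b) + n·(f·b)²`.  The natural map is induced by the inclusion
`O ↪ O'`; we assert it descends to an isomorphism `O/αO ≃ O'/αO'` (a ring isomorphism
commuting with the quotient maps, hence in particular an `O`-module isomorphism).
-/

open Polynomial

/-- The imaginary quadratic order `O' = ℤ[σ]`, `σ` a root of `X² - tX + n`. -/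
abbrev Oord (t n : ℤ) := AdjoinRoot (X ^ 2 - C t * X + C n : ℤ[X])

/-- The generator `σ` of the order. -/
noncomputable def sig (t n : ℤ) : Oord t n := AdjoinRoot.root _

lemma poly_natDegree (t n : ℤ) : (X ^ 2 - C t * X + C n : ℤ[X]).natDegree = 2 := by
  compute_degree!

lemma poly_monic (t n : ℤ) : (X ^ 2 - C t * X + C n : ℤ[X]).Monic := by
  unfold Polynomial.Monic Polynomial.leadingCoeff
  rw [poly_natDegree]
  rw [coeff_add, coeff_sub, coeff_X_pow, coeff_C_mul, coeff_X, coeff_C]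
  norm_num

lemma sig_rel (t n : ℤ) : sig t n ^ 2 - t * sig t n + n = 0 := by
  have h := AdjoinRoot.mk_self (f := (X ^ 2 - C t * X + C n : ℤ[X]))
  simpa [sig, map_add, map_sub, map_mul, map_pow] using h

lemma memS_iff (t n k : ℤ) (x : Oord t n) :
    x ∈ Subring.closure ({(k : Oord t n) * sig t n} : Set (Oord t n)) ↔
      ∃ c d : ℤ, x = c + (k * d : ℤ) * sig t n := by
  constructor
  · intro hx
    induction hx using Subring.closure_induction with
    | mem y hy =>
      rcases Set.mem_singleton_iff.mp hy with rfl
      exact ⟨0, 1, by push_cast; ring⟩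
    | one => exact ⟨1, 0, by push_cast; ring⟩
    | zero => exact ⟨0, 0, by push_cast; ring⟩
    | add u v _ _ hu hv =>
      obtain ⟨c, d, rfl⟩ := hu; obtain ⟨c', d', rfl⟩ := hv
      exact ⟨c + c', d + d', by push_cast; ring⟩
    | neg u _ hu =>
      obtain ⟨c, d, rfl⟩ := hu
      exact ⟨-c, -d, by push_cast; ring⟩
    | mul u v _ _ hu hv =>
      obtain ⟨c, d, rfl⟩ := hu; obtain ⟨c', d', rfl⟩ := hv
      refine ⟨c * c' - n * (k * d) * (k * d'), c * d' + c' * d + t * k * d * d', ?_⟩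
      have hrel := sig_rel t n
      push_cast
      linear_combination ((k : Oord t n) * d * (k * d')) * hrel
  · rintro ⟨c, d, rfl⟩
    refine Subring.add_mem _ (intCast_mem _ c) ?_
    have : ((k * d : ℤ) : Oord t n) * sig t n = d • ((k : Oord t n) * sig t n) := by
      push_cast; rw [zsmul_eq_mul]; ring
    rw [this]
    exact Subring.zsmul_mem _ (Subring.subset_closure (Set.mem_singleton _)) d

lemma closure_sig_top (t n : ℤ) :
    Subring.closure ({sig t n} : Set (Oord t n)) = ⊤ := by
  have h := AdjoinRoot.adjoinRoot_eq_top (f := (X ^ 2 - C t * X + C n : ℤ[X]))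
  rw [eq_top_iff]
  rintro x -
  have hx : x ∈ Algebra.adjoin ℤ ({sig t n} : Set (Oord t n)) := by
    rw [show sig t n = AdjoinRoot.root _ from rfl, h]; trivial
  have hle : Algebra.adjoin ℤ ({sig t n} : Set (Oord t n)) ≤
      { Subring.closure ({sig t n} : Set (Oord t n)) with
        algebraMap_mem' := fun r => by
          rw [eq_intCast (algebraMap ℤ (Oord t n)) r]; exact intCast_mem (Subring.closure ({sig t n} : Set (Oord t n))) r } :=
    Algebra.adjoin_le Subring.subset_closure
  exact hle hx

lemma exists_repr (t n : ℤ) (x : Oord t n) : ∃ c d : ℤ, x = c + d * sig t n := by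
  have hx : x ∈ Subring.closure ({((1:ℤ) : Oord t n) * sig t n} : Set (Oord t n)) := by
    have : (({((1:ℤ) : Oord t n) * sig t n}) : Set (Oord t n)) = {sig t n} := by
      norm_num
    rw [this, closure_sig_top]; trivial
  obtain ⟨c, d, h⟩ := (memS_iff t n 1 x).mp hx
  exact ⟨c, d, by simpa using h⟩

lemma repr_eq_zero (t n : ℤ) {c d : ℤ} (h : (c : Oord t n) + d * sig t n = 0) :
    c = 0 ∧ d = 0 := by
  have hmk : AdjoinRoot.mk (X ^ 2 - C t * X + C n : ℤ[X]) (C c + C d * X) = 0 := by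
    rw [map_add, map_mul, AdjoinRoot.mk_C, AdjoinRoot.mk_C, AdjoinRoot.mk_X]
    exact h
  have hdvd : (X ^ 2 - C t * X + C n : ℤ[X]) ∣ C c + C d * X :=
    (AdjoinRoot.mk_eq_zero).mp hmk
  have hdeg : (X ^ 2 - C t * X + C n : ℤ[X]).degree = 2 := by
    rw [Polynomial.degree_eq_natDegree (poly_monic t n).ne_zero, poly_natDegree]; rfl
  have h0 : (C c + C d * X : ℤ[X]) = 0 := by
    by_contra hne
    have hle := Polynomial.degree_le_of_dvd hdvd hne
    rw [hdeg] at hle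
    have : (C c + C d * X : ℤ[X]).degree ≤ 1 :=
      le_trans (Polynomial.degree_add_le _ _) (by
        simp only [sup_le_iff]
        exact ⟨le_trans Polynomial.degree_C_le (by norm_num),
          le_trans (Polynomial.degree_mul_le _ _) (by
            rw [Polynomial.degree_X]
            simpa using add_le_add_left (Polynomial.degree_C_le (a := d)) 1)⟩)
    have := le_trans hle this
    norm_num at this
  constructor
  · have h1 : (C c + C d * X : ℤ[X]).coeff 0 = 0 := by rw [h0]; simp
    rw [coeff_add, coeff_C_mul, coeff_X, coeff_C] at h1; simpa using h1
  · have h1 : (C c + C d * X : ℤ[X]).coeff 1 = 0 := by rw [h0]; simp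
    rw [coeff_add, coeff_C_mul, coeff_X, coeff_C] at h1; simpa using h1


theorem quotient_iso_of_norm_coprime_index (t n : ℤ) (himag : t ^ 2 - 4 * n < 0)
    (f : ℤ) (hf : 0 < f) (a b : ℤ)
    (hcop : IsCoprime (a ^ 2 + t * a * (f * b) + n * (f * b) ^ 2) f)
    (α : Subring.closure ({(f : Oord t n) * sig t n} : Set (Oord t n)))
    (hα : (α : Oord t n) = (a : Oord t n) + (f * b : ℤ) * sig t n)
    (hα0 : (α : Oord t n) ≠ 0) :
    ∃ e : (Subring.closure ({(f : Oord t n) * sig t n} : Set (Oord t n)) ⧸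
            Ideal.span {α}) ≃+*
          (Oord t n ⧸ Ideal.span {(α : Oord t n)}),
      ∀ x : Subring.closure ({(f : Oord t n) * sig t n} : Set (Oord t n)),
        e (Ideal.Quotient.mk (Ideal.span {α}) x) =
          Ideal.Quotient.mk (Ideal.span {(α : Oord t n)}) (x : Oord t n) := by
  have hrel := sig_rel t n
  -- coprimality of a and f
  have ha : IsCoprime a f := by
    have h2 : IsCoprime (a ^ 2 + f * (t * a * b + n * f * b ^ 2)) f := by
      have : a ^ 2 + t * a * (f * b) + n * (f * b) ^ 2
          = a ^ 2 + f * (t * a * b + n * f * b ^ 2) := by ring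
      rwa [this] at hcop
    exact (IsCoprime.pow_left_iff (by norm_num : 0 < 2)).mp h2.of_add_mul_left_left
  obtain ⟨u, v, huv⟩ := hcop
  have huvc : (u : Oord t n) * (a ^ 2 + t * a * (f * b) + n * (f * b) ^ 2 : ℤ)
      + (v : Oord t n) * f = 1 := by
    have := congrArg (fun z : ℤ => (z : Oord t n)) huv
    push_cast at this ⊢
    linear_combination this
  -- the conjugate identity
  have key1 : (α : Oord t n) * (((a + t * (f * b) : ℤ) : Oord t n) - ((f * b : ℤ) : Oord t n) * sig t n)
      = ((a ^ 2 + t * a * (f * b) + n * (f * b) ^ 2 : ℤ) : Oord t n) := by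
    rw [hα]
    push_cast at hrel ⊢
    linear_combination (-((f : Oord t n) * b) ^ 2) * hrel
  -- the ring hom
  set φ : Subring.closure ({(f : Oord t n) * sig t n} : Set (Oord t n)) →+* Oord t n ⧸ Ideal.span {(α : Oord t n)} :=
    (Ideal.Quotient.mk (Ideal.span {(α : Oord t n)})).comp (Subring.subtype _) with hφ
  have h0 : ∀ x ∈ Ideal.span {α}, φ x = 0 := by
    intro x hx
    obtain ⟨y, rfl⟩ := Ideal.mem_span_singleton.mp hx
    show Ideal.Quotient.mk _ ((α * y) : Oord t n) = 0
    rw [Ideal.Quotient.eq_zero_iff_mem]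
    exact Ideal.mul_mem_right _ _ (Ideal.subset_span (Set.mem_singleton _))
  set e : (Subring.closure ({(f : Oord t n) * sig t n} : Set (Oord t n)) ⧸ Ideal.span {α}) →+* Oord t n ⧸ Ideal.span {(α : Oord t n)} :=
    Ideal.Quotient.lift _ φ h0 with he
  have hsurj : Function.Surjective e := by
    intro q
    obtain ⟨x, rfl⟩ := Ideal.Quotient.mk_surjective q
    obtain ⟨c, d, rfl⟩ := exists_repr t n x
    have hsmem : ((c : Oord t n) + ((f * (d * v) : ℤ) : Oord t n) * sig t n) ∈ Subring.closure ({(f : Oord t n) * sig t n} : Set (Oord t n)) :=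
      (memS_iff t n f _).mpr ⟨c, d * v, rfl⟩
    refine ⟨Ideal.Quotient.mk _ ⟨_, hsmem⟩, ?_⟩
    show Ideal.Quotient.mk _ ((c : Oord t n) + ((f * (d * v) : ℤ) : Oord t n) * sig t n)
      = Ideal.Quotient.mk _ ((c : Oord t n) + (d : Oord t n) * sig t n)
    rw [Ideal.Quotient.mk_eq_mk_iff_sub_mem, Ideal.mem_span_singleton]
    refine ⟨(((a + t * (f * b) : ℤ) : Oord t n) - ((f * b : ℤ) : Oord t n) * sig t n)
      * ((-(u * d) : ℤ) * sig t n), ?_⟩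
    push_cast at key1 huvc ⊢
    linear_combination ((u : Oord t n) * d * sig t n) * key1 + ((d : Oord t n) * sig t n) * huvc
  have hinj : Function.Injective e := by
    intro x y hxy
    obtain ⟨x, rfl⟩ := Ideal.Quotient.mk_surjective x
    obtain ⟨y, rfl⟩ := Ideal.Quotient.mk_surjective y
    rw [he, Ideal.Quotient.lift_mk, Ideal.Quotient.lift_mk] at hxy
    have hsub : (x : Oord t n) - (y : Oord t n) ∈ Ideal.span {(α : Oord t n)} := by
      rw [← Ideal.Quotient.mk_eq_mk_iff_sub_mem]
      exact hxy
    obtain ⟨w, hw⟩ := Ideal.mem_span_singleton.mp hsub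
    obtain ⟨c, d, hwrep⟩ := exists_repr t n w
    obtain ⟨cx, dx, hxval⟩ := (memS_iff t n f (x : Oord t n)).mp x.2
    obtain ⟨cy, dy, hyval⟩ := (memS_iff t n f (y : Oord t n)).mp y.2
    have hexp : (α : Oord t n) * w
        = ((a * c - n * (f * b) * d : ℤ) : Oord t n)
          + ((a * d + f * b * c + t * (f * b) * d : ℤ) : Oord t n) * sig t n := by
      rw [hα, hwrep]
      push_cast at hrel ⊢
      linear_combination ((f : Oord t n) * b * d) * hrel
    have heq : ((cx - cy - (a * c - n * (f * b) * d) : ℤ) : Oord t n)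
        + ((f * dx - f * dy - (a * d + f * b * c + t * (f * b) * d) : ℤ) : Oord t n) * sig t n = 0 := by
      rw [hxval, hyval, hexp] at hw
      push_cast at hw ⊢
      linear_combination hw
    obtain ⟨h1, h2⟩ := repr_eq_zero t n heq
    have hfd : f ∣ d := by
      refine IsCoprime.dvd_of_dvd_mul_left ha.symm ⟨dx - dy - b * c - t * b * d, ?_⟩
      linarith [h2]
    obtain ⟨d', rfl⟩ := hfd
    have hwS : w ∈ Subring.closure ({(f : Oord t n) * sig t n} : Set (Oord t n)) := (memS_iff t n f w).mpr ⟨c, d', by rw [hwrep]⟩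
    have : x - y ∈ Ideal.span {α} := by
      rw [Ideal.mem_span_singleton]
      exact ⟨⟨w, hwS⟩, Subtype.ext (by simpa using hw)⟩
    rwa [Ideal.Quotient.mk_eq_mk_iff_sub_mem]
  exact ⟨RingEquiv.ofBijective e ⟨hinj, hsurj⟩, fun x => rfl⟩
end

section
/- Let O = Z[τ] be an imaginary quadratic order and m ≥ 1. The proportion of elements of O/mO that generate O/mO as an O-module is at least (φ(m)/m)^2, where φ is Euler's totient function. -/
/-!
STATEMENT 5: Let `O = ℤ[τ]` be an imaginary quadratic order and `m ≥ 1`.  The proportion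
of elements of `O/mO` that generate `O/mO` as an `O`-module is at least `(φ(m)/m)²`,
where `φ` is Euler's totient function.

We model `O = ℤ[τ]`, `τ` a root of `X² - tX + n` with `t² - 4n < 0`.  Since `O/mO` has
cardinality `m²`, the proportion statement is formalized as
`φ(m)² · #(O/mO) ≤ m² · #{generators}`.
-/

open Polynomial Finset

lemma prime_count (t n : ℤ) (p : ℕ) (hp : p.Prime) :
    (p - 1) ^ 2 ≤ Nat.card {x : ZMod p × ZMod p //
      IsUnit (x.1 ^ 2 + (t : ZMod p) * x.1 * x.2 + (n : ZMod p) * x.2 ^ 2)} := by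
  haveI : Fact p.Prime := ⟨hp⟩
  set N : ZMod p × ZMod p → ZMod p :=
    fun x => x.1 ^ 2 + (t : ZMod p) * x.1 * x.2 + (n : ZMod p) * x.2 ^ 2 with hN
  set q : (ZMod p)[X] := X ^ 2 + C (t : ZMod p) * X + C (n : ZMod p) with hq
  have hqdeg : q.natDegree = 2 := by rw [hq]; compute_degree!
  set Z : Finset (ZMod p × ZMod p) := univ.filter (fun x => N x = 0) with hZ
  have hsub : Z ⊆ insert ((0 : ZMod p), (0 : ZMod p))
      ((q.roots.toFinset ×ˢ ((univ : Finset (ZMod p)).erase 0)).image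
        fun cb => (cb.1 * cb.2, cb.2)) := by
    intro x hx
    rw [hZ, mem_filter] at hx
    obtain ⟨-, hx⟩ := hx
    rcases eq_or_ne x.2 0 with h2 | h2
    · have h0 : x.1 ^ 2 = 0 := by rw [hN] at hx; simpa [h2, sq] using hx
      have h1 : x.1 = 0 := pow_eq_zero_iff two_ne_zero |>.mp h0
      simp [Prod.ext_iff, h1, h2]
    · refine mem_insert_of_mem (mem_image.mpr ⟨(x.1 * x.2⁻¹, x.2), ?_, ?_⟩)
      · refine mem_product.mpr ⟨Multiset.mem_toFinset.mpr ?_, mem_erase.mpr ⟨h2, mem_univ _⟩⟩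
        rw [mem_roots']
        refine ⟨fun h0 => by rw [h0] at hqdeg; simp at hqdeg, ?_⟩
        rw [IsRoot.def, hq]
        simp only [eval_add, eval_mul, eval_pow, eval_X, eval_C]
        rw [hN] at hx
        field_simp
        linear_combination hx
      · have h3 : x.1 * x.2⁻¹ * x.2 = x.1 := by field_simp
        simp [h3]
  have hZcard : Z.card ≤ 2 * p - 1 := by
    have c1 : Z.card ≤ ((q.roots.toFinset ×ˢ ((univ : Finset (ZMod p)).erase 0)).image
        (fun cb : ZMod p × ZMod p => (cb.1 * cb.2, cb.2))).card + 1 :=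
      le_trans (Finset.card_le_card hsub) (Finset.card_insert_le _ _)
    have c2 : ((q.roots.toFinset ×ˢ ((univ : Finset (ZMod p)).erase 0)).image
        (fun cb : ZMod p × ZMod p => (cb.1 * cb.2, cb.2))).card ≤
        q.roots.toFinset.card * ((univ : Finset (ZMod p)).erase 0).card := by
      refine le_trans Finset.card_image_le ?_
      rw [Finset.card_product]
    have c3 : q.roots.toFinset.card ≤ 2 := by
      calc q.roots.toFinset.card ≤ Multiset.card q.roots := q.roots.toFinset_card_le
        _ ≤ q.natDegree := q.card_roots'
        _ = 2 := hqdeg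
    have c4 : ((univ : Finset (ZMod p)).erase 0).card = p - 1 := by
      rw [Finset.card_erase_of_mem (mem_univ _), Finset.card_univ, ZMod.card]
    have := hp.one_lt
    have c5 : q.roots.toFinset.card * ((univ : Finset (ZMod p)).erase 0).card ≤ 2 * (p - 1) := by
      rw [c4]; exact Nat.mul_le_mul_right _ c3
    omega
  have hcard : Nat.card {x : ZMod p × ZMod p // IsUnit (N x)} =
      (univ.filter fun x => IsUnit (N x)).card := by
    rw [Nat.card_eq_fintype_card, Fintype.card_subtype]
  rw [hN] at hcard
  rw [hcard]
  have hfilter : (univ.filter fun x => IsUnit (N x)) = univ \ Z := by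
    rw [hZ, ← Finset.filter_not]
    congr 1
    ext x
    simp [isUnit_iff_ne_zero]
  rw [← hN, hfilter, Finset.card_sdiff_of_subset (Finset.subset_univ _), Finset.card_univ]
  have hcu : Fintype.card (ZMod p × ZMod p) = p ^ 2 := by
    simp [ZMod.card, sq]
  rw [hcu]
  have h1 : 1 ≤ p := hp.one_lt.le
  have h2 : 2 * p ≤ p ^ 2 + 1 := by nlinarith
  have key : (p - 1) ^ 2 = p ^ 2 - (2 * p - 1) := by
    obtain ⟨q', rfl⟩ : ∃ q', p = q' + 1 := ⟨p - 1, by omega⟩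
    have e1 : (q' + 1) ^ 2 = q' ^ 2 + 2 * q' + 1 := by ring
    have e2 : (q' + 1 - 1) ^ 2 = q' ^ 2 := by norm_num
    omega
  omega



lemma unit_iff_pow {p k : ℕ} (hp : p.Prime) (hk : 1 ≤ k) (x : ZMod (p ^ k)) :
    IsUnit x ↔ IsUnit (ZMod.castHom (dvd_pow_self p (by omega : k ≠ 0)) (ZMod p) x) := by
  haveI : Fact p.Prime := ⟨hp⟩
  haveI : NeZero (p ^ k) := ⟨pow_ne_zero _ hp.pos.ne'⟩
  set π := ZMod.castHom (dvd_pow_self p (by omega : k ≠ 0)) (ZMod p)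
  constructor
  · exact fun h => h.map π
  · intro h
    have hx : ((x.val : ℕ) : ZMod (p ^ k)) = x := ZMod.natCast_rightInverse x
    have hπ : π x = ((x.val : ℕ) : ZMod p) := by
      rw [← hx]; simp [π]
    rw [hπ, ZMod.isUnit_iff_coprime] at h
    rw [← hx, ZMod.isUnit_iff_coprime]
    exact Nat.Coprime.pow_right _ h
lemma prime_pow_count (t n : ℤ) (p k : ℕ) (hp : p.Prime) (hk : 1 ≤ k) :
    Nat.totient (p ^ k) ^ 2 ≤ Nat.card {x : ZMod (p ^ k) × ZMod (p ^ k) //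
      IsUnit (x.1 ^ 2 + (t : ZMod (p ^ k)) * x.1 * x.2 + (n : ZMod (p ^ k)) * x.2 ^ 2)} := by
  haveI : Fact p.Prime := ⟨hp⟩
  haveI : NeZero (p ^ k) := ⟨pow_ne_zero _ hp.pos.ne'⟩
  haveI : NeZero (p ^ (k - 1)) := ⟨pow_ne_zero _ hp.pos.ne'⟩
  set π := ZMod.castHom (dvd_pow_self p (by omega : k ≠ 0)) (ZMod p) with hπdef
  have hπs : ∀ a : ZMod p, π ((a.val : ℕ) : ZMod (p ^ k)) = a := by
    intro a
    rw [map_natCast]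
    exact ZMod.natCast_rightInverse a
  have hπp : ∀ u : ZMod (p ^ (k - 1)), π ((p : ZMod (p ^ k)) * ((u.val : ℕ) : ZMod (p ^ k))) = 0 := by
    intro u
    rw [map_mul, map_natCast, map_natCast]
    simp
  -- the injection
  set D := {y : ZMod p × ZMod p //
      IsUnit (y.1 ^ 2 + (t : ZMod p) * y.1 * y.2 + (n : ZMod p) * y.2 ^ 2)} ×
      (ZMod (p ^ (k - 1)) × ZMod (p ^ (k - 1)))
  set lift : ZMod p → ZMod (p ^ (k - 1)) → ZMod (p ^ k) :=
    fun a u => ((a.val : ℕ) : ZMod (p ^ k)) + (p : ZMod (p ^ k)) * ((u.val : ℕ) : ZMod (p ^ k))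
    with hliftdef
  have hπlift : ∀ a u, π (lift a u) = a := by
    intro a u
    rw [hliftdef]
    simp only [map_add, hπs, hπp, add_zero]
  have hliftinj : ∀ a u a' u', lift a u = lift a' u' → a = a' ∧ u = u' := by
    intro a u a' u' h
    have ha : a = a' := by rw [← hπlift a u, ← hπlift a' u', h]
    refine ⟨ha, ?_⟩
    rw [hliftdef] at h
    simp only [ha] at h
    have h2 : (p : ZMod (p ^ k)) * ((u.val : ℕ) : ZMod (p ^ k)) =
        (p : ZMod (p ^ k)) * ((u'.val : ℕ) : ZMod (p ^ k)) := by
      exact add_left_cancel h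
    have h3 : ((p * u.val : ℕ) : ZMod (p ^ k)) = ((p * u'.val : ℕ) : ZMod (p ^ k)) := by
      push_cast; exact h2
    have hlt : ∀ v : ZMod (p ^ (k - 1)), p * v.val < p ^ k := by
      intro v
      calc p * v.val < p * p ^ (k - 1) := by
            exact (Nat.mul_lt_mul_left hp.pos).mpr v.val_lt
        _ = p ^ k := by rw [← pow_succ']; congr 1; omega
    have h4 : p * u.val = p * u'.val := by
      have := congrArg ZMod.val h3
      rwa [ZMod.val_cast_of_lt (hlt u), ZMod.val_cast_of_lt (hlt u')] at this
    exact ZMod.val_injective _ (Nat.eq_of_mul_eq_mul_left hp.pos h4)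
  have hunit : ∀ (y : ZMod p × ZMod p) (u : ZMod (p ^ (k-1)) × ZMod (p ^ (k-1))),
      IsUnit (y.1 ^ 2 + (t : ZMod p) * y.1 * y.2 + (n : ZMod p) * y.2 ^ 2) →
      IsUnit ((lift y.1 u.1) ^ 2 + (t : ZMod (p ^ k)) * (lift y.1 u.1) * (lift y.2 u.2)
        + (n : ZMod (p ^ k)) * (lift y.2 u.2) ^ 2) := by
    intro y u hy
    rw [unit_iff_pow hp hk]
    have : π ((lift y.1 u.1) ^ 2 + (t : ZMod (p ^ k)) * (lift y.1 u.1) * (lift y.2 u.2)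
        + (n : ZMod (p ^ k)) * (lift y.2 u.2) ^ 2) =
        y.1 ^ 2 + (t : ZMod p) * y.1 * y.2 + (n : ZMod p) * y.2 ^ 2 := by
      simp only [map_add, map_mul, map_pow, map_intCast, hπlift]
    rw [this]
    exact hy
  set J : D → {x : ZMod (p ^ k) × ZMod (p ^ k) //
      IsUnit (x.1 ^ 2 + (t : ZMod (p ^ k)) * x.1 * x.2 + (n : ZMod (p ^ k)) * x.2 ^ 2)} :=
    fun yu => ⟨(lift yu.1.1.1 yu.2.1, lift yu.1.1.2 yu.2.2), hunit yu.1.1 yu.2 yu.1.2⟩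
    with hJdef
  have hJinj : Function.Injective J := by
    rintro ⟨⟨⟨a1, a2⟩, ha⟩, ⟨u1, u2⟩⟩ ⟨⟨⟨b1, b2⟩, hb⟩, ⟨v1, v2⟩⟩ hab
    rw [hJdef, Subtype.mk_eq_mk, Prod.mk.injEq] at hab
    obtain ⟨h1, h2⟩ := hab
    obtain ⟨e1, e2⟩ := hliftinj _ _ _ _ h1
    obtain ⟨e3, e4⟩ := hliftinj _ _ _ _ h2
    subst e1; subst e2; subst e3; subst e4
    rfl
  have hcle := Nat.card_le_card_of_injective J hJinj
  have hD : Nat.card D = Nat.card {y : ZMod p × ZMod p //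
      IsUnit (y.1 ^ 2 + (t : ZMod p) * y.1 * y.2 + (n : ZMod p) * y.2 ^ 2)} *
      (p ^ (k - 1) * p ^ (k - 1)) := by
    simp [D, Nat.card_prod, ZMod.card]
  have htot : Nat.totient (p ^ k) = p ^ (k - 1) * (p - 1) := by
    have := Nat.totient_prime_pow hp (show 0 < k by omega)
    rwa [show k - 1 = k - 1 from rfl] at this
  rw [htot]
  calc (p ^ (k - 1) * (p - 1)) ^ 2 = (p - 1) ^ 2 * (p ^ (k - 1) * p ^ (k - 1)) := by ring
    _ ≤ Nat.card {y : ZMod p × ZMod p //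
        IsUnit (y.1 ^ 2 + (t : ZMod p) * y.1 * y.2 + (n : ZMod p) * y.2 ^ 2)} *
        (p ^ (k - 1) * p ^ (k - 1)) := by
        exact Nat.mul_le_mul_right _ (prime_count t n p hp)
    _ = Nat.card D := hD.symm
    _ ≤ _ := hcle



lemma prod_isUnit_iff' {α β : Type*} [CommMonoid α] [CommMonoid β] (z : α × β) :
    IsUnit z ↔ IsUnit z.1 ∧ IsUnit z.2 := by
  simp only [isUnit_iff_exists_inv]
  constructor
  · rintro ⟨⟨w1, w2⟩, hw⟩
    rw [Prod.ext_iff] at hw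
    exact ⟨⟨w1, hw.1⟩, ⟨w2, hw.2⟩⟩
  · rintro ⟨⟨w1, h1⟩, ⟨w2, h2⟩⟩
    exact ⟨(w1, w2), Prod.ext h1 h2⟩

lemma key_count (t n : ℤ) (m : ℕ) :
    Nat.totient m ^ 2 ≤ Nat.card {x : ZMod m × ZMod m //
      IsUnit (x.1 ^ 2 + (t : ZMod m) * x.1 * x.2 + (n : ZMod m) * x.2 ^ 2)} := by
  induction m using Nat.recOnPosPrimePosCoprime with
  | prime_pow p k hp hk => exact prime_pow_count t n p k hp hk
  | zero => simp
  | one =>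
    have : Nonempty {x : ZMod 1 × ZMod 1 //
        IsUnit (x.1 ^ 2 + (t : ZMod 1) * x.1 * x.2 + (n : ZMod 1) * x.2 ^ 2)} :=
      ⟨⟨(0, 0), isUnit_of_subsingleton _⟩⟩
    simp only [Nat.totient_one, one_pow]
    exact Nat.card_pos
  | coprime a b ha hb hab iha ihb =>
    have hane : NeZero a := ⟨by omega⟩
    have hbne : NeZero b := ⟨by omega⟩
    set e := ZMod.chineseRemainder hab with hedef
    set π1 := (RingHom.fst (ZMod a) (ZMod b)).comp e.toRingHom with hπ1def
    set π2 := (RingHom.snd (ZMod a) (ZMod b)).comp e.toRingHom with hπ2def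
    set F : (ZMod (a * b) × ZMod (a * b)) ≃ ((ZMod a × ZMod a) × (ZMod b × ZMod b)) :=
      (e.toEquiv.prodCongr e.toEquiv).trans (Equiv.prodProdProdComm _ _ _ _) with hFdef
    have hiff : ∀ x : ZMod (a * b) × ZMod (a * b),
        IsUnit (x.1 ^ 2 + ((t : ZMod (a*b))) * x.1 * x.2 + (n : ZMod (a*b)) * x.2 ^ 2) ↔
        (IsUnit ((F x).1.1 ^ 2 + (t : ZMod a) * (F x).1.1 * (F x).1.2
            + (n : ZMod a) * (F x).1.2 ^ 2) ∧
         IsUnit ((F x).2.1 ^ 2 + (t : ZMod b) * (F x).2.1 * (F x).2.2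
            + (n : ZMod b) * (F x).2.2 ^ 2)) := by
      intro x
      have h1 : IsUnit (x.1 ^ 2 + ((t : ZMod (a*b))) * x.1 * x.2 + (n : ZMod (a*b)) * x.2 ^ 2) ↔
          IsUnit (e (x.1 ^ 2 + ((t : ZMod (a*b))) * x.1 * x.2 + (n : ZMod (a*b)) * x.2 ^ 2)) := by
        constructor
        · exact fun h => h.map e
        · intro h
          have := h.map e.symm
          simpa using this
      rw [h1, prod_isUnit_iff']
      have he1 : (e (x.1 ^ 2 + ((t : ZMod (a*b))) * x.1 * x.2 + (n : ZMod (a*b)) * x.2 ^ 2)).1 =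
          π1 (x.1 ^ 2 + ((t : ZMod (a*b))) * x.1 * x.2 + (n : ZMod (a*b)) * x.2 ^ 2) := rfl
      have he2 : (e (x.1 ^ 2 + ((t : ZMod (a*b))) * x.1 * x.2 + (n : ZMod (a*b)) * x.2 ^ 2)).2 =
          π2 (x.1 ^ 2 + ((t : ZMod (a*b))) * x.1 * x.2 + (n : ZMod (a*b)) * x.2 ^ 2) := rfl
      rw [he1, he2]
      have c1 : π1 (x.1 ^ 2 + ((t : ZMod (a*b))) * x.1 * x.2 + (n : ZMod (a*b)) * x.2 ^ 2) =
          (F x).1.1 ^ 2 + (t : ZMod a) * (F x).1.1 * (F x).1.2 + (n : ZMod a) * (F x).1.2 ^ 2 := by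
        have e1 : (F x).1.1 = π1 x.1 := rfl
        have e2 : (F x).1.2 = π1 x.2 := rfl
        rw [e1, e2]
        simp only [map_add, map_mul, map_pow, map_intCast]
      have c2 : π2 (x.1 ^ 2 + ((t : ZMod (a*b))) * x.1 * x.2 + (n : ZMod (a*b)) * x.2 ^ 2) =
          (F x).2.1 ^ 2 + (t : ZMod b) * (F x).2.1 * (F x).2.2 + (n : ZMod b) * (F x).2.2 ^ 2 := by
        have e1 : (F x).2.1 = π2 x.1 := rfl
        have e2 : (F x).2.2 = π2 x.2 := rfl
        rw [e1, e2]
        simp only [map_add, map_mul, map_pow, map_intCast]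
      rw [c1, c2]
    have hequiv : {x : ZMod (a * b) × ZMod (a * b) //
        IsUnit (x.1 ^ 2 + (t : ZMod (a*b)) * x.1 * x.2 + (n : ZMod (a*b)) * x.2 ^ 2)} ≃
        ({y : ZMod a × ZMod a // IsUnit (y.1 ^ 2 + (t : ZMod a) * y.1 * y.2
            + (n : ZMod a) * y.2 ^ 2)} ×
         {z : ZMod b × ZMod b // IsUnit (z.1 ^ 2 + (t : ZMod b) * z.1 * z.2
            + (n : ZMod b) * z.2 ^ 2)}) :=
      (F.subtypeEquiv hiff).trans (Equiv.subtypeProdEquivProd)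
    rw [Nat.card_congr hequiv, Nat.card_prod, Nat.totient_mul hab]
    calc (Nat.totient a * Nat.totient b) ^ 2 = Nat.totient a ^ 2 * Nat.totient b ^ 2 := by ring
      _ ≤ _ := Nat.mul_le_mul iha ihb



lemma span_singleton_top_iff {t n : ℤ} {I : Ideal (Oord t n)}
    (x : Oord t n ⧸ I) :
    Submodule.span (Oord t n) {x} = ⊤ ↔ IsUnit x := by
  constructor
  · intro h
    have h1 : (1 : Oord t n ⧸ I) ∈ Submodule.span (Oord t n) {x} := h ▸ Submodule.mem_top
    obtain ⟨a, ha⟩ := Submodule.mem_span_singleton.mp h1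
    have ha' : Ideal.Quotient.mk I a * x = 1 := by
      simpa [Algebra.smul_def] using ha
    exact IsUnit.of_mul_eq_one (a := x) (Ideal.Quotient.mk I a) (by rw [mul_comm x]; exact ha')
  · intro h
    obtain ⟨u, rfl⟩ := h
    rw [Submodule.eq_top_iff']
    intro y
    obtain ⟨a, ha⟩ := Ideal.Quotient.mk_surjective (y * ((u⁻¹ : (Oord t n ⧸ I)ˣ) : Oord t n ⧸ I))
    refine Submodule.mem_span_singleton.mpr ⟨a, ?_⟩
    rw [Algebra.smul_def]
    show Ideal.Quotient.mk I a * (u : Oord t n ⧸ I) = y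
    rw [ha]
    calc (y * ((u⁻¹ : (Oord t n ⧸ I)ˣ) : Oord t n ⧸ I)) * u
        = y * (((u⁻¹ : (Oord t n ⧸ I)ˣ) : Oord t n ⧸ I) * u) := mul_assoc _ _ _
      _ = y := by rw [Units.inv_mul, mul_one]

noncomputable def quotEquivZModAdjoin (t n : ℤ) (m : ℕ) :
    (Oord t n ⧸ Ideal.span {(m : Oord t n)}) ≃+*
      AdjoinRoot ((X ^ 2 - C t * X + C n : ℤ[X]).map (Int.castRingHom (ZMod m))) := by
  set f : ℤ[X] := X ^ 2 - C t * X + C n with hf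
  have hspan : Ideal.span {(m : Oord t n)} =
      (Ideal.span {(m : ℤ)}).map (AdjoinRoot.of f) := by
    rw [Ideal.map_span, Set.image_singleton, map_natCast]
  refine (Ideal.quotEquivOfEq hspan).trans ?_
  refine (AdjoinRoot.quotAdjoinRootEquivQuotPolynomialQuot (Ideal.span {(m : ℤ)}) f).trans ?_
  refine Ideal.quotientEquiv _ _
    (Polynomial.mapEquiv (Int.quotientSpanNatEquivZMod m)) ?_
  rw [Ideal.map_span, Set.image_singleton]
  have h1 : ((Polynomial.mapEquiv (Int.quotientSpanNatEquivZMod m) :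
        (ℤ ⧸ Ideal.span {(m : ℤ)})[X] ≃+* (ZMod m)[X]) :
        (ℤ ⧸ Ideal.span {(m : ℤ)})[X] →+* (ZMod m)[X])
        (f.map (Ideal.Quotient.mk (Ideal.span {(m : ℤ)}))) =
      (f.map (Ideal.Quotient.mk (Ideal.span {(m : ℤ)}))).map
        (Int.quotientSpanNatEquivZMod m : (ℤ ⧸ Ideal.span {(m : ℤ)}) →+* ZMod m) := rfl
  rw [h1, Polynomial.map_map]
  exact congrArg (fun φ : ℤ →+* ZMod m =>
    Ideal.span ({Polynomial.map φ f} : Set (ZMod m)[X])) (Subsingleton.elim _ _)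



theorem generator_proportion (t n : ℤ) (himag : t ^ 2 - 4 * n < 0)
    (m : ℕ) (hm : 1 ≤ m) :
    (Nat.totient m) ^ 2 * Nat.card (Oord t n ⧸ Ideal.span {(m : Oord t n)}) ≤
      m ^ 2 * Nat.card {x : Oord t n ⧸ Ideal.span {(m : Oord t n)} //
        Submodule.span (Oord t n) {x} = ⊤} := by
  haveI : NeZero m := ⟨by omega⟩
  set f : ℤ[X] := X ^ 2 - C t * X + C n with hf
  set g : (ZMod m)[X] := f.map (Int.castRingHom (ZMod m)) with hg
  set S := AdjoinRoot g with hS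
  set R := Oord t n ⧸ Ideal.span {(m : Oord t n)} with hR
  have E : R ≃+* S := quotEquivZModAdjoin t n m
  have hfm : f.Monic := by rw [hf]; monicity!
  have hfd : f.natDegree = 2 := by rw [hf]; compute_degree!
  have hgm : g.Monic := hfm.map _
  have hgexp : g = X ^ 2 - C ((t : ZMod m)) * X + C ((n : ZMod m)) := by
    rw [hg, hf]
    simp [Polynomial.map_sub, Polynomial.map_add, Polynomial.map_mul, Polynomial.map_pow,
      Polynomial.map_X, Polynomial.map_C]
  -- power basis and finiteness
  set pb : PowerBasis (ZMod m) S := AdjoinRoot.powerBasis' hgm with hpb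
  have eqv : S ≃ (Fin pb.dim → ZMod m) := pb.basis.equivFun.toEquiv
  haveI hSfin : Finite S := Finite.of_equiv _ eqv.symm
  haveI hRfin : Finite R := Finite.of_equiv _ E.toEquiv.symm
  have hScard0 : Nat.card S = m ^ pb.dim := by
    rw [Nat.card_congr eqv, Nat.card_fun, Nat.card_zmod, Nat.card_eq_fintype_card,
      Fintype.card_fin]
  -- the case m = 1
  rcases eq_or_lt_of_le hm with h1 | h2
  · haveI : Subsingleton (ZMod m) := by rw [← h1]; infer_instance
    haveI : Subsingleton S := by
      constructor
      intro a b
      obtain ⟨x, rfl⟩ := AdjoinRoot.mk_surjective a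
      obtain ⟨y, rfl⟩ := AdjoinRoot.mk_surjective b
      rw [Subsingleton.elim x y]
    haveI : Subsingleton R := E.toEquiv.subsingleton
    haveI := uniqueOfSubsingleton (0 : R)
    have hcard1 : Nat.card R = 1 := Nat.card_unique
    have hpos : 0 < Nat.card {x : R // Submodule.span (Oord t n) {x} = ⊤} := by
      haveI : Nonempty {x : R // Submodule.span (Oord t n) {x} = ⊤} :=
        ⟨⟨1, (span_singleton_top_iff 1).mpr isUnit_one⟩⟩
      exact Nat.card_pos
    have htot1 : Nat.totient m = 1 := by rw [← h1]; exact Nat.totient_one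
    rw [hcard1, htot1]
    have hm2 : 1 ≤ m ^ 2 := Nat.one_le_pow _ _ (by omega)
    simpa using Nat.mul_le_mul hm2 hpos
  haveI : Fact (1 < m) := ⟨h2⟩
  have hpbdim : pb.dim = 2 := by
    rw [hpb]
    show g.natDegree = 2
    rw [hg, hfm.natDegree_map, hfd]
  have hScard : Nat.card S = m ^ 2 := by rw [hScard0, hpbdim]
  -- root relation
  set r : S := AdjoinRoot.root g with hr
  have hrel : r ^ 2 - AdjoinRoot.of g ((t : ZMod m)) * r + AdjoinRoot.of g ((n : ZMod m)) = 0 := by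
    have h0 : AdjoinRoot.mk g (X ^ 2 - C ((t : ZMod m)) * X + C ((n : ZMod m))) = 0 := by
      rw [← hgexp]; exact AdjoinRoot.mk_self
    simpa [map_sub, map_add, map_mul, map_pow, AdjoinRoot.mk_X, AdjoinRoot.mk_C] using h0
  -- injection of the counting set into units of S
  set e : ZMod m × ZMod m → S :=
    fun y => AdjoinRoot.of g y.1 + AdjoinRoot.of g y.2 * r with he
  have hunit : ∀ y : ZMod m × ZMod m,
      IsUnit (y.1 ^ 2 + (t : ZMod m) * y.1 * y.2 + (n : ZMod m) * y.2 ^ 2) → IsUnit (e y) := by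
    intro y hy
    have key : e y * (AdjoinRoot.of g y.1 + AdjoinRoot.of g y.2 *
        (AdjoinRoot.of g ((t : ZMod m)) - r)) =
        AdjoinRoot.of g (y.1 ^ 2 + (t : ZMod m) * y.1 * y.2 + (n : ZMod m) * y.2 ^ 2) := by
      rw [he]
      simp only [map_add, map_mul, map_pow]
      linear_combination (-(AdjoinRoot.of g y.2) ^ 2) * hrel
    have := hy.map (AdjoinRoot.of g)
    rw [← key] at this
    exact isUnit_of_mul_isUnit_left this
  have hinj : Function.Injective e := by
    intro y z hyz
    have hd : AdjoinRoot.mk g (C (y.1 - z.1) + C (y.2 - z.2) * X) = 0 := by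
      simp only [map_add, map_mul, map_sub, AdjoinRoot.mk_X, AdjoinRoot.mk_C]
      rw [he] at hyz
      have : AdjoinRoot.of g y.1 + AdjoinRoot.of g y.2 * r =
          AdjoinRoot.of g z.1 + AdjoinRoot.of g z.2 * r := hyz
      simp only [AdjoinRoot.of, RingHom.comp_apply] at this ⊢
      linear_combination this
    rw [AdjoinRoot.mk_eq_zero] at hd
    have hq0 : C (y.1 - z.1) + C (y.2 - z.2) * X = 0 := by
      by_contra hq
      have hle : (C (y.1 - z.1) + C (y.2 - z.2) * X).natDegree ≤ 1 := by compute_degree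
      obtain ⟨h, hqe⟩ := hd
      have hh : h ≠ 0 := by rintro rfl; rw [mul_zero] at hqe; exact hq hqe
      have h2le : (C (y.1 - z.1) + C (y.2 - z.2) * X).natDegree =
          g.natDegree + h.natDegree := by rw [hqe, hgm.natDegree_mul' hh]
      rw [hg, hfm.natDegree_map, hfd] at h2le
      omega
    have hc0 : y.1 - z.1 = 0 := by
      have := congrArg (fun q => Polynomial.coeff q 0) hq0
      simpa using this
    have hc1 : y.2 - z.2 = 0 := by
      have := congrArg (fun q => Polynomial.coeff q 1) hq0
      simpa using this
    have e1 : y.1 = z.1 := by linear_combination hc0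
    have e2 : y.2 = z.2 := by linear_combination hc1
    exact Prod.ext e1 e2
  -- counting
  set T := {y : ZMod m × ZMod m //
      IsUnit (y.1 ^ 2 + (t : ZMod m) * y.1 * y.2 + (n : ZMod m) * y.2 ^ 2)} with hT
  have hTle : Nat.card T ≤ Nat.card {s : S // IsUnit s} :=
    Nat.card_le_card_of_injective
      (fun y : T => (⟨e y.1, hunit y.1 y.2⟩ : {s : S // IsUnit s}))
      (fun a b hab => Subtype.ext (hinj (congrArg Subtype.val hab)))
  -- transfer the generator subtype
  have hEquiv : {x : R // Submodule.span (Oord t n) {x} = ⊤} ≃ {s : S // IsUnit s} :=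
    (Equiv.subtypeEquivRight (fun x => span_singleton_top_iff x)).trans
      (E.toEquiv.subtypeEquiv (fun x => ⟨fun h => h.map E,
        fun h => by simpa using h.map E.symm⟩))
  have hRcard : Nat.card R = m ^ 2 := by rw [Nat.card_congr E.toEquiv, hScard]
  rw [Nat.card_congr hEquiv, hRcard]
  calc Nat.totient m ^ 2 * m ^ 2 ≤ Nat.card T * m ^ 2 :=
        Nat.mul_le_mul_right _ (key_count t n m)
    _ ≤ Nat.card {s : S // IsUnit s} * m ^ 2 := Nat.mul_le_mul_right _ hTle
    _ = m ^ 2 * Nat.card {s : S // IsUnit s} := Nat.mul_comm _ _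
end

section
/- Let O be an imaginary quadratic order of discriminant Δ and let m | Δ. Define m' = m/4 if 4 | m, m' = m/2 if m ≡ 2 (mod 4), and m' = m otherwise. Then there exists τ ∈ O such that Z[τ] ≡ O modulo m (i.e., O = Z[τ] + mO) and Tr(τ) ≡ N(τ) ≡ 0 (mod m'). -/
/-!
STATEMENT 7: Let `O` be the imaginary quadratic order of discriminant `Δ` and let
`m ∣ Δ`.  Define `m' = m/4` if `4 ∣ m`, `m' = m/2` if `m ≡ 2 (mod 4)`, and `m' = m`
otherwise.  Then there exists `τ ∈ O` such that `ℤ[τ] ≡ O` modulo `m`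
(i.e. `O = ℤ[τ] + mO`) and `Tr(τ) ≡ N(τ) ≡ 0 (mod m')`.

We model `O = ℤ[σ]` where `σ = (Δ + √Δ)/2` is a root of `X² - ΔX + (Δ² - Δ)/4`, which
has trace `Δ` and norm `(Δ² - Δ)/4`; `Δ < 0` and `Δ ≡ 0, 1 (mod 4)`.  An element
`τ = a + bσ` has `Tr(τ) = 2a + bΔ` and `N(τ) = a² + abΔ + b²(Δ² - Δ)/4`.
-/

open Polynomial

/-- The order of discriminant `Δ`: `ℤ[σ]` with `σ` a root of `X² - ΔX + (Δ² - Δ)/4`. -/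
abbrev OΔ (Δ : ℤ) := AdjoinRoot (X ^ 2 - C Δ * X + C ((Δ ^ 2 - Δ) / 4) : ℤ[X])

/-- The generator `σ = (Δ + √Δ)/2` of the order of discriminant `Δ`. -/
noncomputable def sigΔ (Δ : ℤ) : OΔ Δ := AdjoinRoot.root _

/-- `m' = m/4` if `4 ∣ m`; `m' = m/2` if `m ≡ 2 (mod 4)`; `m' = m` otherwise. -/
def mPrime (m : ℕ) : ℕ := if 4 ∣ m then m / 4 else if m % 4 = 2 then m / 2 else m

lemma mem_closure_tau (Δ a : ℤ) (x : OΔ Δ) :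
    x ∈ Subring.closure ({(a : OΔ Δ) + 1 * sigΔ Δ} : Set (OΔ Δ)) := by
  have hσ : sigΔ Δ ∈ Subring.closure ({(a : OΔ Δ) + 1 * sigΔ Δ} : Set (OΔ Δ)) := by
    have hmem : (a : OΔ Δ) + 1 * sigΔ Δ ∈
        Subring.closure ({(a : OΔ Δ) + 1 * sigΔ Δ} : Set (OΔ Δ)) :=
      Subring.subset_closure rfl
    have h := Subring.sub_mem _ hmem (intCast_mem _ a)
    simpa using h
  have htop : Subring.closure ({sigΔ Δ} : Set (OΔ Δ)) = ⊤ := by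
    have h1 := Algebra.adjoin_int ({sigΔ Δ} : Set (OΔ Δ))
    have h2 : Algebra.adjoin ℤ ({sigΔ Δ} : Set (OΔ Δ)) = ⊤ := AdjoinRoot.adjoinRoot_eq_top
    replace h1 : ⊤ = subalgebraOfSubring (Subring.closure ({sigΔ Δ} : Set (OΔ Δ))) := by
      convert h1 using 1; convert h2.symm
      all_goals first | rfl | exact Subsingleton.elim _ _
    ext y
    simp only [Subring.mem_top, iff_true]
    have : y ∈ subalgebraOfSubring (Subring.closure ({sigΔ Δ} : Set (OΔ Δ))) := by
      rw [← h1]; trivial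
    exact this
  have hle : Subring.closure ({sigΔ Δ} : Set (OΔ Δ)) ≤
      Subring.closure ({(a : OΔ Δ) + 1 * sigΔ Δ} : Set (OΔ Δ)) :=
    Subring.closure_le.2 (by simpa using hσ)
  exact hle (htop ▸ Subring.mem_top x)

/-- if u is odd and u ∣ 2t then u ∣ t -/
lemma odd_dvd_two_mul {u t : ℤ} (hu : ∃ v, u = 2 * v + 1) (h : u ∣ 2 * t) : u ∣ t := by
  obtain ⟨v, hv⟩ := hu
  obtain ⟨j, hj⟩ := h
  refine ⟨j * (v + 1) - t, ?_⟩
  subst hv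
  linear_combination (v + 1) * hj

theorem exists_tau_trace_norm_zero (Δ : ℤ) (hneg : Δ < 0)
    (hcong : Δ % 4 = 0 ∨ Δ % 4 = 1)
    (m : ℕ) (hm : 0 < m) (hdvd : (m : ℤ) ∣ Δ) :
    ∃ a b : ℤ,
      -- ℤ[τ] ≡ O modulo m, i.e. O = ℤ[τ] + mO, where τ = a + bσ
      (∀ x : OΔ Δ, ∃ y ∈ Subring.closure ({(a : OΔ Δ) + b * sigΔ Δ} : Set (OΔ Δ)),
        ∃ z : OΔ Δ, x = y + (m : OΔ Δ) * z) ∧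
      -- Tr(τ) ≡ 0 (mod m')
      (mPrime m : ℤ) ∣ (2 * a + b * Δ) ∧
      -- N(τ) ≡ 0 (mod m')
      (mPrime m : ℤ) ∣ (a ^ 2 + a * b * Δ + b ^ 2 * ((Δ ^ 2 - Δ) / 4)) := by

  obtain ⟨k, hk⟩ := hdvd
  rcases hcong with h0 | h1
  · -- Δ ≡ 0 (mod 4); Δ = 4t, τ = -2t + σ, Tr = 0, N = -t
    obtain ⟨t, ht⟩ : ∃ t, Δ = 4 * t := ⟨Δ / 4, by omega⟩
    have hdivc : (Δ ^ 2 - Δ) / 4 = 4 * t ^ 2 - t := by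
      rw [ht, show (4 * t) ^ 2 - 4 * t = 4 * (4 * t ^ 2 - t) by ring]
      exact Int.mul_ediv_cancel_left _ (by norm_num)
    have hmt : (mPrime m : ℤ) ∣ t := by
      by_cases h4 : 4 ∣ m
      · obtain ⟨v, hv⟩ := h4
        have hval : mPrime m = v := by
          have h4' : 4 ∣ m := ⟨v, hv⟩
          simp only [mPrime, if_pos h4']
          omega
        rw [hval]
        refine ⟨k, ?_⟩
        have h4t : 4 * t = 4 * ((v : ℤ) * k) := by
          rw [← ht, hk, hv]; push_cast; ring
        exact mul_left_cancel₀ (by norm_num : (4 : ℤ) ≠ 0) h4t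
      · by_cases h2 : m % 4 = 2
        · obtain ⟨u, hu, huo⟩ : ∃ u, m = 2 * u ∧ u % 2 = 1 := ⟨m / 2, by omega, by omega⟩
          have hval : mPrime m = u := by
            simp only [mPrime, if_neg h4, if_pos h2]
            omega
          rw [hval]
          apply odd_dvd_two_mul ⟨(u : ℤ) / 2, by omega⟩
          apply odd_dvd_two_mul ⟨(u : ℤ) / 2, by omega⟩
          refine ⟨2 * k, ?_⟩
          rw [show 2 * (2 * t) = 4 * t by ring, ← ht, hk, hu]
          push_cast; ring
        · have hval : mPrime m = m := by simp only [mPrime, if_neg h4, if_neg h2]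
          rw [hval]
          have hmo : m % 2 = 1 := by omega
          apply odd_dvd_two_mul ⟨((m : ℤ) - 1) / 2, by omega⟩
          apply odd_dvd_two_mul ⟨((m : ℤ) - 1) / 2, by omega⟩
          refine ⟨k, ?_⟩
          rw [show 2 * (2 * t) = 4 * t by ring, ← ht, hk]
    refine ⟨-(2 * t), 1, fun x => ⟨x, mem_closure_tau Δ _ x, 0, by ring⟩, ?_, ?_⟩
    · have h : 2 * -(2 * t) + 1 * Δ = 0 := by rw [ht]; ring
      rw [h]
      exact dvd_zero _
    · rw [hdivc]
      have h : (-(2 * t)) ^ 2 + -(2 * t) * 1 * Δ + 1 ^ 2 * (4 * t ^ 2 - t) = -t := by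
        rw [ht]; ring
      rw [h]
      exact hmt.neg_right
  · -- Δ ≡ 1 (mod 4); Δ = 4t+1, m odd, τ = -Δ(u+1) + σ with m = 2u+1
    obtain ⟨t, ht⟩ : ∃ t, Δ = 4 * t + 1 := ⟨Δ / 4, by omega⟩
    have hmo : m % 2 = 1 := by
      rcases Nat.even_or_odd m with he | ho
      · exfalso
        obtain ⟨w, hw⟩ := he
        have hd2 : (2 : ℤ) ∣ Δ := ⟨(w : ℤ) * k, by rw [hk, hw]; push_cast; ring⟩
        omega
      · exact Nat.odd_iff.mp ho
    obtain ⟨u, hu⟩ : ∃ u, m = 2 * u + 1 := ⟨m / 2, by omega⟩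
    have hval : mPrime m = m := by
      have h4 : ¬ 4 ∣ m := by omega
      have h2 : ¬ m % 4 = 2 := by omega
      simp only [mPrime, if_neg h4, if_neg h2]
    have hdivc : (Δ ^ 2 - Δ) / 4 = Δ * t := by
      rw [show Δ ^ 2 - Δ = 4 * (Δ * t) by rw [ht]; ring]
      exact Int.mul_ediv_cancel_left _ (by norm_num)
    refine ⟨-(Δ * ((u : ℤ) + 1)), 1, fun x => ⟨x, mem_closure_tau Δ _ x, 0, by ring⟩, ?_, ?_⟩
    · rw [hval]
      refine ⟨-Δ, ?_⟩
      have hmz : (m : ℤ) = 2 * (u : ℤ) + 1 := by rw [hu]; push_cast; ring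
      rw [hmz]
      ring
    · rw [hval, hdivc]
      refine ⟨k * (Δ * ((u : ℤ) + 1) * (u : ℤ) + t), ?_⟩
      rw [hk]
      ring
end
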